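/- Let k ≥ 2, ε > 0, and f : [-ε,ε] → ℝ a C^k diffeomorphism onto its image with ‖f - id‖_{C^k} < η, where 0 < η < 1/((k+1)·2^{k+3}). Then the inverse f^{-1} satisfies ‖f^{-1} - id‖_{C^k} < η + (2^{k+2}(k+1)/k)·η² ≤ (1 + 1/(2k))·η < 2η on its domain. -/

import Mathlib

lemma aux_choose_le_two_pow (n m : ℕ) : (n.choose m : ℝ) ≤ 2 ^ n := by
  have h : n.choose m ≤ 2 ^ n := by
    rcases le_or_gt m n with h | h
    · calc n.choose m ≤ ∑ i ∈ Finset.range (n+1), n.choose i :=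
        Finset.single_le_sum (fun i _ => Nat.zero_le _) (Finset.mem_range.2 (by omega))
      _ = 2 ^ n := Nat.sum_range_choose n
    · rw [Nat.choose_eq_zero_of_lt h]; exact Nat.zero_le _
  exact_mod_cast h

set_option maxHeartbeats 1000000 in
theorem stmt12 (k : ℕ) (hk : 2 ≤ k) (ε η : ℝ) (hε : 0 < ε)
    (hη0 : 0 < η) (hη : η < 1 / (((k : ℝ) + 1) * 2 ^ (k + 3)))
    (f g : ℝ → ℝ) (hf : ContDiffOn ℝ k f (Set.Icc (-ε) ε))
    (hinj : Set.InjOn f (Set.Icc (-ε) ε))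
    (hg : ContDiffOn ℝ k g (f '' Set.Icc (-ε) ε))
    (hgf : ∀ x ∈ Set.Icc (-ε) ε, g (f x) = x)
    (hclose : ∀ r ≤ k, ∀ x ∈ Set.Icc (-ε) ε,
      |iteratedDerivWithin r (fun z => f z - z) (Set.Icc (-ε) ε) x| < η) :
    (∀ r ≤ k, ∀ y ∈ f '' Set.Icc (-ε) ε,
        |iteratedDerivWithin r (fun z => g z - z) (f '' Set.Icc (-ε) ε) y| <
          η + 2 ^ (k + 2) * ((k : ℝ) + 1) / k * η ^ 2) ∧
      η + 2 ^ (k + 2) * ((k : ℝ) + 1) / k * η ^ 2 ≤ (1 + 1 / (2 * (k : ℝ))) * η ∧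
      (1 + 1 / (2 * (k : ℝ))) * η < 2 * η := by
  have hk0 : (0:ℝ) < k := by positivity
  have hk3 : (3:ℝ) ≤ (k:ℝ) + 1 := by
    have : (2:ℝ) ≤ (k:ℝ) := by exact_mod_cast hk
    linarith
  -- basic numeric facts
  have hden : (0:ℝ) < ((k : ℝ) + 1) * 2 ^ (k + 3) := by positivity
  have hη1 : η * (((k : ℝ) + 1) * 2 ^ (k + 3)) < 1 := by
    rw [lt_div_iff₀ hden] at hη; linarith
  have hη96 : η ≤ 1 / 96 := by
    have h32 : (32:ℝ) ≤ 2 ^ (k + 3) := by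
      calc (32:ℝ) = 2 ^ 5 := by norm_num
      _ ≤ 2 ^ (k + 3) := by
        apply pow_le_pow_right₀ (by norm_num); omega
    nlinarith
  have hKη : (2:ℝ) ^ k * η ≤ 1 / (8 * ((k:ℝ) + 1)) := by
    have hexp : (2:ℝ) ^ (k + 3) = 2 ^ k * 8 := by rw [pow_add]; norm_num
    rw [le_div_iff₀ (by positivity)]
    nlinarith [pow_pos (show (0:ℝ) < 2 by norm_num) k]
  have hKη6 : 4 * ((2:ℝ) ^ k * η) ≤ 1 / 6 := by
    have : 1 / (8 * ((k:ℝ)+1)) ≤ 1 / 24 := by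
      apply div_le_div_of_nonneg_left (by norm_num) (by norm_num) (by nlinarith)
    linarith
  have hkK : (k:ℝ) * ((2:ℝ) ^ k * η) ≤ 1 / 8 := by
    have h1 : (k:ℝ) * ((2:ℝ)^k * η) ≤ (k:ℝ) * (1 / (8 * ((k:ℝ)+1))) := by
      apply mul_le_mul_of_nonneg_left hKη (le_of_lt hk0)
    have h2 : (k:ℝ) * (1 / (8 * ((k:ℝ)+1))) ≤ 1/8 := by
      rw [mul_one_div, div_le_div_iff₀ (by positivity) (by norm_num)]
      nlinarith
    linarith
  set S := Set.Icc (-ε) ε with hSdef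
  set T := f '' S with hTdef
  have hab : -ε < ε := by linarith
  have hSu : UniqueDiffOn ℝ S := uniqueDiffOn_Icc hab
  have hk1 : (1 : WithTop ℕ∞) ≤ (k : ℕ∞) := by exact_mod_cast (by omega : 1 ≤ k)
  have hfd : DifferentiableOn ℝ f S := hf.differentiableOn (by norm_cast; omega)
  -- e and its derivative
  have heC : ContDiffOn ℝ k (fun z => f z - z) S := hf.sub contDiffOn_id
  have hed : DifferentiableOn ℝ (fun z => f z - z) S := heC.differentiableOn (by norm_cast; omega)
  set e' := derivWithin (fun z => f z - z) S with he'def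
  have he'C : ContDiffOn ℝ (↑(k-1)) e' S := by
    apply heC.derivWithin hSu
    have h1 : (k-1) + 1 = k := by omega
    have : ((k - 1 : ℕ) : WithTop ℕ∞) + 1 = (k : WithTop ℕ∞) := by
      exact_mod_cast congrArg (Nat.cast : ℕ → WithTop ℕ∞) h1
    rw [this]
  have he'val : ∀ x ∈ S, derivWithin f S x = 1 + e' x := by
    intro x hx
    have hsub : HasDerivWithinAt (fun z => f z - z) (derivWithin f S x - 1) S x :=
      (hfd x hx).hasDerivWithinAt.sub (hasDerivWithinAt_id x S)
    rw [he'def, hsub.derivWithin (hSu x hx)]; ring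
  have he'iter : ∀ m, m ≤ k - 1 → ∀ x ∈ S, |iteratedDerivWithin m e' S x| < η := by
    intro m hm x hx
    rw [he'def, ← iteratedDerivWithin_succ']
    exact hclose (m+1) (by omega) x hx
  have he'small : ∀ x ∈ S, |e' x| < η := by
    intro x hx
    have := he'iter 0 (by omega) x hx
    rwa [iteratedDerivWithin_zero] at this
  have hf'pos : ∀ x ∈ S, 1 - η ≤ derivWithin f S x := by
    intro x hx
    have h1 := abs_lt.1 (he'small x hx)
    rw [he'val x hx]; linarith [h1.1]
  -- T is an interval
  have hTne : (f (-ε)) ∈ T := Set.mem_image_of_mem f (Set.left_mem_Icc.2 (le_of_lt hab))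
  have hTne2 : (f ε) ∈ T := Set.mem_image_of_mem f (Set.right_mem_Icc.2 (le_of_lt hab))
  have hTIcc : T = Set.Icc (sInf T) (sSup T) :=
    eq_Icc_of_connected_compact ⟨⟨_, hTne⟩, isPreconnected_Icc.image f hf.continuousOn⟩
      (isCompact_Icc.image_of_continuousOn hf.continuousOn)
  have hTu : UniqueDiffOn ℝ T := by
    rw [hTIcc]
    apply uniqueDiffOn_Icc
    rcases lt_or_ge (sInf T) (sSup T) with h | h
    · exact h
    · exfalso
      have h1 : f (-ε) = f ε := by
        have e1 := hTIcc ▸ hTne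
        have e2 := hTIcc ▸ hTne2
        simp only [Set.mem_Icc] at e1 e2
        have : sSup T ≤ sInf T := h
        linarith [e1.1, e1.2, e2.1, e2.2]
      exact absurd (hinj (Set.left_mem_Icc.2 hab.le) (Set.right_mem_Icc.2 hab.le) h1)
        (by intro hc; linarith)
  -- q := 1/f'
  set q := fun x => (derivWithin f S x)⁻¹ with hqdef
  have hf'ne : ∀ x ∈ S, derivWithin f S x ≠ 0 := by
    intro x hx; have := hf'pos x hx; intro hc; rw [hc] at this; linarith
  have hf'C : ContDiffOn ℝ (↑(k-1)) (derivWithin f S) S := by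
    apply hf.derivWithin hSu
    have h1 : (k-1) + 1 = k := by omega
    have : ((k - 1 : ℕ) : WithTop ℕ∞) + 1 = (k : WithTop ℕ∞) := by
      exact_mod_cast congrArg (Nat.cast : ℕ → WithTop ℕ∞) h1
    rw [this]
  have hqC : ContDiffOn ℝ (↑(k-1)) q S := hf'C.inv hf'ne
  have hq0 : ∀ x ∈ S, |q x| ≤ 1 + 2*η := by
    intro x hx
    have hfx := hf'pos x hx
    have hfxpos : 0 < derivWithin f S x := by linarith
    rw [hqdef]
    simp only
    rw [abs_of_pos (inv_pos.2 hfxpos), inv_eq_one_div, div_le_iff₀ hfxpos]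
    nlinarith
  have hqid : Set.EqOn q (fun y => 1 - e' y * q y) S := by
    intro x hx
    have h1 : q x * (1 + e' x) = 1 := by
      rw [← he'val x hx, hqdef]
      exact inv_mul_cancel₀ (hf'ne x hx)
    simp only
    linear_combination h1
  have cnv : ∀ (n : ℕ) (u : ℝ → ℝ) (x : ℝ),
      ‖iteratedFDerivWithin ℝ n u S x‖ = |iteratedDerivWithin n u S x| := by
    intro n u x
    rw [norm_iteratedFDerivWithin_eq_norm_iteratedDerivWithin, Real.norm_eq_abs]
  have hqiter : ∀ i, i ≤ k - 1 → 1 ≤ i → ∀ x ∈ S, |iteratedDerivWithin i q S x| ≤ 3 * η := by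
    intro i
    induction i using Nat.strong_induction_on with
    | _ i IH =>
      intro hik h1i x hx
      obtain ⟨i', rfl⟩ : ∃ i', i = i' + 1 := ⟨i - 1, by omega⟩
      have e1 : iteratedDerivWithin (i'+1) q S x
          = - iteratedDerivWithin (i'+1) (fun y => e' y * q y) S x := by
        rw [iteratedDerivWithin_congr hqid hx,
          iteratedDerivWithin_const_sub (by omega) 1,
          iteratedDerivWithin_fun_neg]
      have eabs : |iteratedDerivWithin (i'+1) q S x|
          = |iteratedDerivWithin (i'+1) (fun y => e' y * q y) S x| := by rw [e1, abs_neg]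
      have hAnn : (0:ℝ) ≤ |iteratedDerivWithin (i'+1) q S x| := abs_nonneg _
      have hcast : ((i' + 1 : ℕ) : WithTop ℕ∞) ≤ ((k - 1 : ℕ) : WithTop ℕ∞) := by
        exact_mod_cast hik
      have hmul := norm_iteratedFDerivWithin_mul_le (𝕜 := ℝ) he'C hqC hSu hx hcast
      rw [cnv, Finset.sum_range_succ', Finset.sum_range_succ] at hmul
      have hbound : |iteratedDerivWithin (i'+1) (fun y => e' y * q y) S x|
          ≤ (3*η*η) * (i' * 2^(i'+1)) + η * (1+2*η)
            + η * |iteratedDerivWithin (i'+1) q S x| := by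
        refine le_trans hmul ?_
        have t0 : ((i'+1).choose 0 : ℝ) * ‖iteratedFDerivWithin ℝ 0 e' S x‖ *
            ‖iteratedFDerivWithin ℝ (i'+1-0) q S x‖
            ≤ η * |iteratedDerivWithin (i'+1) q S x| := by
          rw [cnv, cnv]
          simp only [Nat.choose_zero_right, Nat.cast_one, one_mul, Nat.sub_zero,
            iteratedDerivWithin_zero]
          exact mul_le_mul (he'small x hx).le le_rfl (abs_nonneg _) hη0.le
        have tlast : ((i'+1).choose (i'+1) : ℝ) * ‖iteratedFDerivWithin ℝ (i'+1) e' S x‖ *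
            ‖iteratedFDerivWithin ℝ (i'+1-(i'+1)) q S x‖ ≤ η * (1+2*η) := by
          rw [cnv, cnv]
          simp only [Nat.choose_self, Nat.cast_one, one_mul, Nat.sub_self,
            iteratedDerivWithin_zero]
          exact mul_le_mul (he'iter (i'+1) hik x hx).le (hq0 x hx) (abs_nonneg _) hη0.le
        have tmid : ∀ m ∈ Finset.range i',
            ((i'+1).choose (m+1) : ℝ) * ‖iteratedFDerivWithin ℝ (m+1) e' S x‖ *
            ‖iteratedFDerivWithin ℝ (i'+1-(m+1)) q S x‖ ≤ 2^(i'+1) * (η * (3*η)) := by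
          intro m hm
          rw [Finset.mem_range] at hm
          rw [cnv, cnv]
          have hq3 : |iteratedDerivWithin (i'+1-(m+1)) q S x| ≤ 3*η :=
            IH (i'+1-(m+1)) (by omega) (by omega) (by omega) x hx
          have he1 : |iteratedDerivWithin (m+1) e' S x| ≤ η :=
            (he'iter (m+1) (by omega) x hx).le
          rw [mul_assoc]
          have h2 : |iteratedDerivWithin (m+1) e' S x| *
              |iteratedDerivWithin (i'+1-(m+1)) q S x| ≤ η * (3*η) :=
            mul_le_mul he1 hq3 (abs_nonneg _) hη0.le
          exact mul_le_mul (aux_choose_le_two_pow _ _) h2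
            (mul_nonneg (abs_nonneg _) (abs_nonneg _)) (by positivity)
        have hsum : ∑ m ∈ Finset.range i',
            ((i'+1).choose (m+1) : ℝ) * ‖iteratedFDerivWithin ℝ (m+1) e' S x‖ *
            ‖iteratedFDerivWithin ℝ (i'+1-(m+1)) q S x‖
            ≤ i' * (2^(i'+1) * (η * (3*η))) := by
          refine le_trans (Finset.sum_le_sum tmid) ?_
          rw [Finset.sum_const, Finset.card_range, nsmul_eq_mul]
        have := add_le_add (add_le_add hsum tlast) t0
        refine le_trans this (le_of_eq ?_)
        ring
      -- numeric conclusion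
      have hii : (i':ℝ) * 2^(i'+1) * η ≤ 1/4 := by
        have h1 : (i':ℝ) ≤ k := by exact_mod_cast (by omega : i' ≤ k)
        have h2 : (2:ℝ)^(i'+1) ≤ 2 * 2^k := by
          rw [pow_succ]
          have h3 : (2:ℝ)^i' ≤ 2^k := pow_le_pow_right₀ (by norm_num) (by omega)
          nlinarith [pow_pos (show (0:ℝ) < 2 by norm_num) i']
        have h3 : (i':ℝ) * 2^(i'+1) * η ≤ (k:ℝ) * (2 * 2^k) * η := by
          apply mul_le_mul_of_nonneg_right _ hη0.le
          apply mul_le_mul h1 h2 (by positivity) (by positivity)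
        nlinarith
      have key : 3*η*η*((i':ℝ)*2^(i'+1)) ≤ (3/4)*η := by
        nlinarith [mul_le_mul_of_nonneg_left hii (by positivity : (0:ℝ) ≤ 3*η)]
      have hηA : η * |iteratedDerivWithin (i'+1) q S x|
          ≤ (1/96) * |iteratedDerivWithin (i'+1) q S x| :=
        mul_le_mul_of_nonneg_right hη96 hAnn
      have hη2 : η*η ≤ (1/96)*η := mul_le_mul_of_nonneg_right hη96 hη0.le
      calc |iteratedDerivWithin (i'+1) q S x|
          = |iteratedDerivWithin (i'+1) (fun y => e' y * q y) S x| := eabs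
        _ ≤ 3 * η := by nlinarith [hbound]
  -- the inverse-side function h and its iterated derivatives pulled back by f
  set h := fun z => g z - z with hhdef
  have hhC : ContDiffOn ℝ (k:ℕ) h T := hg.sub contDiffOn_id
  have hHC : ∀ r, r ≤ k → ContDiffOn ℝ (↑(k-r)) (iteratedDerivWithin r h T) T := by
    intro r
    induction r with
    | zero =>
      intro _
      simpa [iteratedDerivWithin_zero] using hhC
    | succ r IH =>
      intro hr
      have hcast : ((k - (r+1) : ℕ) : WithTop ℕ∞) + 1 ≤ ((k - r : ℕ) : WithTop ℕ∞) := by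
        have h1 : (k - (r+1)) + 1 ≤ k - r := by omega
        calc ((k - (r+1) : ℕ) : WithTop ℕ∞) + 1
            = ((k - (r+1) + 1 : ℕ) : WithTop ℕ∞) := by push_cast; ring
          _ ≤ _ := by exact_mod_cast h1
      have hC := (IH (by omega)).derivWithin hTu hcast
      exact hC.congr (fun y hy => congrFun iteratedDerivWithin_succ y)
  have hGC : ∀ r, r ≤ k →
      ContDiffOn ℝ (↑(k-r)) (fun x => iteratedDerivWithin r h T (f x)) S := by
    intro r hr
    have hcast : ((k - r : ℕ) : WithTop ℕ∞) ≤ (k : WithTop ℕ∞) := by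
      exact_mod_cast (by omega : k - r ≤ k)
    exact (hHC r hr).comp (hf.of_le hcast) (Set.mapsTo_image f S)
  have hGrec : ∀ r, r + 1 ≤ k →
      Set.EqOn (fun x => iteratedDerivWithin (r+1) h T (f x))
        (fun x => q x * derivWithin (fun x' => iteratedDerivWithin r h T (f x')) S x) S := by
    intro r hr x hx
    have hfx : f x ∈ T := Set.mem_image_of_mem f hx
    have hrk : ((r:ℕ) : WithTop ℕ∞) < (k : WithTop ℕ∞) := by exact_mod_cast (by omega : r < k)
    have hdH : DifferentiableWithinAt ℝ (iteratedDerivWithin r h T) T (f x) :=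
      (hhC.differentiableOn_iteratedDerivWithin hrk hTu) (f x) hfx
    have hcomp : HasDerivWithinAt (fun x' => iteratedDerivWithin r h T (f x'))
        (derivWithin (iteratedDerivWithin r h T) T (f x) * derivWithin f S x) S x :=
      HasDerivWithinAt.comp x hdH.hasDerivWithinAt (hfd x hx).hasDerivWithinAt
        (Set.mapsTo_image f S)
    have e2 : derivWithin (fun x' => iteratedDerivWithin r h T (f x')) S x
        = derivWithin (iteratedDerivWithin r h T) T (f x) * derivWithin f S x :=
      hcomp.derivWithin (hSu x hx)
    simp only
    rw [e2, iteratedDerivWithin_succ, hqdef]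
    have hne := hf'ne x hx
    field_simp
  -- main induction
  have main : ∀ r, r ≤ k → ∀ j, j + r ≤ k → ∀ x ∈ S,
      |iteratedDerivWithin j (fun x' => iteratedDerivWithin r h T (f x')) S x|
        ≤ η + (4*((2:ℝ)^k - 2^(k-r)))*η^2 := by
    intro r
    induction r with
    | zero =>
      intro _ j hj x hx
      have hEq : Set.EqOn (fun x' => iteratedDerivWithin 0 h T (f x'))
          (fun z => -(f z - z)) S := by
        intro z hz
        simp only [iteratedDerivWithin_zero, hhdef]
        rw [hgf z hz]; ring
      rw [iteratedDerivWithin_congr hEq hx, iteratedDerivWithin_fun_neg, abs_neg]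
      have h1 := (hclose j (by omega) x hx).le
      have h2 : (4*((2:ℝ)^k - 2^(k-0)))*η^2 = 0 := by norm_num
      linarith
    | succ r IH =>
      intro hr1 j hj x hx
      have hcast1 : ((j:ℕ) : WithTop ℕ∞) + 1 ≤ ((k - r : ℕ) : WithTop ℕ∞) := by
        have h1 : j + 1 ≤ k - r := by omega
        calc ((j:ℕ) : WithTop ℕ∞) + 1 = ((j + 1 : ℕ) : WithTop ℕ∞) := by push_cast; ring
          _ ≤ _ := by exact_mod_cast h1
      have hGC' : ContDiffOn ℝ (↑j)
          (derivWithin (fun x' => iteratedDerivWithin r h T (f x')) S) S :=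
        (hGC r (by omega)).derivWithin hSu hcast1
      have hqC' : ContDiffOn ℝ (↑j) q S :=
        hqC.of_le (by exact_mod_cast (by omega : j ≤ k - 1))
      have e0 : iteratedDerivWithin j (fun x' => iteratedDerivWithin (r+1) h T (f x')) S x
          = iteratedDerivWithin j
            (fun x' => q x' * derivWithin (fun x'' => iteratedDerivWithin r h T (f x'')) S x') S x :=
        iteratedDerivWithin_congr (hGrec r hr1) hx
      have hmul := norm_iteratedFDerivWithin_mul_le (𝕜 := ℝ) (N := (j : WithTop ℕ∞))
        hqC' hGC' hSu hx le_rfl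
      rw [cnv, Finset.sum_range_succ'] at hmul
      set c : ℝ := 4*((2:ℝ)^k - 2^(k-r)) with hcdef
      set β : ℝ := η + c*η^2 with hβdef
      -- bound the pieces
      have hc0 : 0 ≤ c := by
        have h1 : (2:ℝ)^(k-r) ≤ 2^k := pow_le_pow_right₀ (by norm_num) (by omega)
        rw [hcdef]; linarith
      have hβpos : 0 ≤ β := by
        rw [hβdef]; nlinarith [mul_nonneg hc0 (sq_nonneg η), hη0.le]
      have hder : ∀ m, m ≤ j → |iteratedDerivWithin m
          (derivWithin (fun x' => iteratedDerivWithin r h T (f x')) S) S x| ≤ β := by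
        intro m hm
        rw [← iteratedDerivWithin_succ']
        exact IH (by omega) (m+1) (by omega) x hx
      have t0 : ((j).choose 0 : ℝ) * ‖iteratedFDerivWithin ℝ 0 q S x‖ *
          ‖iteratedFDerivWithin ℝ (j-0)
            (derivWithin (fun x' => iteratedDerivWithin r h T (f x')) S) S x‖
          ≤ (1+2*η) * β := by
        rw [cnv, cnv]
        simp only [Nat.choose_zero_right, Nat.cast_one, one_mul, Nat.sub_zero,
          iteratedDerivWithin_zero]
        exact mul_le_mul (hq0 x hx) (hder j le_rfl) (abs_nonneg _) (by linarith)
      have tmid : ∀ m ∈ Finset.range j,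
          ((j).choose (m+1) : ℝ) * ‖iteratedFDerivWithin ℝ (m+1) q S x‖ *
          ‖iteratedFDerivWithin ℝ (j-(m+1))
            (derivWithin (fun x' => iteratedDerivWithin r h T (f x')) S) S x‖
          ≤ ((j).choose (m+1) : ℝ) * (3*η*β) := by
        intro m hm
        rw [Finset.mem_range] at hm
        have hq3 : |iteratedDerivWithin (m+1) q S x| ≤ 3*η :=
          hqiter (m+1) (by omega) (by omega) x hx
        have hd2 : |iteratedDerivWithin (j-(m+1))
            (derivWithin (fun x' => iteratedDerivWithin r h T (f x')) S) S x| ≤ β :=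
          hder (j-(m+1)) (by omega)
        have h12 : |iteratedDerivWithin (m+1) q S x| *
            |iteratedDerivWithin (j-(m+1))
              (derivWithin (fun x' => iteratedDerivWithin r h T (f x')) S) S x| ≤ 3*η*β :=
          mul_le_mul hq3 hd2 (abs_nonneg _) (by positivity)
        calc ((j).choose (m+1) : ℝ) * ‖iteratedFDerivWithin ℝ (m+1) q S x‖ *
            ‖iteratedFDerivWithin ℝ (j-(m+1))
              (derivWithin (fun x' => iteratedDerivWithin r h T (f x')) S) S x‖
            = ((j).choose (m+1) : ℝ) * (|iteratedDerivWithin (m+1) q S x| *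
              |iteratedDerivWithin (j-(m+1))
                (derivWithin (fun x' => iteratedDerivWithin r h T (f x')) S) S x|) := by
              rw [cnv, cnv, mul_assoc]
          _ ≤ ((j).choose (m+1) : ℝ) * (3*η*β) :=
              mul_le_mul_of_nonneg_left h12 (by positivity)
      have hchoose : (∑ m ∈ Finset.range j, ((j).choose (m+1) : ℝ)) = 2^j - 1 := by
        have hN := Nat.sum_range_choose j
        rw [Finset.sum_range_succ'] at hN
        have h2 : ((∑ m ∈ Finset.range j, (j).choose (m+1) : ℕ) : ℝ) + (j.choose 0 : ℝ)
            = 2^j := by exact_mod_cast congrArg (Nat.cast : ℕ → ℝ) hN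
        rw [Nat.choose_zero_right] at h2
        push_cast at h2 ⊢
        linarith
      have hsum : ∑ m ∈ Finset.range j,
          ((j).choose (m+1) : ℝ) * ‖iteratedFDerivWithin ℝ (m+1) q S x‖ *
          ‖iteratedFDerivWithin ℝ (j-(m+1))
            (derivWithin (fun x' => iteratedDerivWithin r h T (f x')) S) S x‖
          ≤ ((2:ℝ)^j - 1) * (3*η*β) := by
        refine le_trans (Finset.sum_le_sum tmid) ?_
        rw [← Finset.sum_mul, hchoose]
      have htot : |iteratedDerivWithin j
          (fun x' => iteratedDerivWithin (r+1) h T (f x')) S x|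
          ≤ ((2:ℝ)^j - 1) * (3*η*β) + (1+2*η) * β := by
        rw [e0]
        exact le_trans hmul (add_le_add hsum t0)
      -- numeric step
      set P : ℝ := (2:ℝ)^(k-(r+1)) with hPdef
      have hkr : k - r = (k-(r+1)) + 1 := by omega
      have hcsucc : 4*((2:ℝ)^k - 2^(k-(r+1))) = c + 4*P := by
        rw [hcdef, hPdef, hkr, pow_succ]; ring
      have hP1 : (1:ℝ) ≤ P := by rw [hPdef]; exact one_le_pow₀ (by norm_num)
      have h2j : (2:ℝ)^j ≤ P := by
        rw [hPdef]; exact pow_le_pow_right₀ (by norm_num) (by omega)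
      have hcrη : c*η ≤ 1/6 := by
        have h1 : c ≤ 4*2^k := by
          rw [hcdef]; nlinarith [pow_pos (show (0:ℝ) < 2 by norm_num) (k-r)]
        calc c*η ≤ 4*2^k*η := mul_le_mul_of_nonneg_right h1 hη0.le
          _ = 4*((2:ℝ)^k*η) := by ring
          _ ≤ 1/6 := hKη6
      rw [hcsucc]
      refine le_trans htot ?_
      have h3ηβ : (0:ℝ) ≤ 3*η*β := mul_nonneg (by positivity) hβpos
      have s1 : ((2:ℝ)^j - 1)*(3*η*β) + (1+2*η)*β ≤ (P - 1)*(3*η*β) + (1+2*η)*β := by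
        nlinarith [mul_le_mul_of_nonneg_right (by linarith : (2:ℝ)^j - 1 ≤ P - 1) h3ηβ]
      have s2 : (P - 1)*(3*η*β) + (1+2*η)*β ≤ η + (c+4*P)*η^2 := by
        rw [hβdef]
        have f1 : (3*P - 1) * (c*η) * η^2 ≤ (3*P - 1) * (1/6) * η^2 := by
          apply mul_le_mul_of_nonneg_right _ (sq_nonneg η)
          exact mul_le_mul_of_nonneg_left hcrη (by linarith)
        nlinarith [f1, mul_nonneg hc0 (sq_nonneg η), sq_nonneg η,
          mul_nonneg (by linarith : (0:ℝ) ≤ P) (sq_nonneg η), hη96, hη0.le]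
      linarith
  refine ⟨?_, ?_, ?_⟩
  · intro r hr y hy
    obtain ⟨x, hx, rfl⟩ := hy
    have hm := main r hr 0 (by omega) x hx
    simp only [iteratedDerivWithin_zero] at hm
    refine lt_of_le_of_lt hm ?_
    have hpk : (0:ℝ) < (2:ℝ)^k := by positivity
    have h1 : (1:ℝ) ≤ 2^(k-r) := one_le_pow₀ (by norm_num)
    have h2 : (2:ℝ)^(k+2) = 4*2^k := by rw [pow_add]; ring
    have hlt : 4*((2:ℝ)^k - 2^(k-r)) < 2^(k+2)*((k:ℝ)+1)/k := by
      rw [h2, lt_div_iff₀ hk0]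
      nlinarith [mul_le_mul_of_nonneg_right h1 hk0.le, hpk, hk0]
    nlinarith [mul_lt_mul_of_pos_right hlt (by positivity : (0:ℝ) < η^2)]
  · have e3 : (2:ℝ)^(k+3) = 2^(k+2)*2 := by rw [pow_succ]
    have hη1' := hη1
    rw [e3] at hη1'
    have key : 2^(k+2)*((k:ℝ)+1)*η ≤ 1/2 := by nlinarith [hη1']
    have h4 : 2^(k+2)*((k:ℝ)+1)/k*η^2 = (2^(k+2)*((k:ℝ)+1)*η)*η/(k:ℝ) := by ring
    have h5 : (1 + 1/(2*(k:ℝ)))*η = η + ((1/2)*η)/(k:ℝ) := by field_simp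
    rw [h4, h5]
    have h6 : (2^(k+2)*((k:ℝ)+1)*η)*η ≤ (1/2)*η := mul_le_mul_of_nonneg_right key hη0.le
    have h7 : (2^(k+2)*((k:ℝ)+1)*η)*η/(k:ℝ) ≤ ((1/2)*η)/(k:ℝ) := by gcongr
    linarith
  · have h8 : (1:ℝ)/(2*(k:ℝ)) < 1 := by
      rw [div_lt_one (by positivity)]; nlinarith
    nlinarith [hη0, h8]
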